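/- Let A, B, F ∈ ℝ^{n×n} with F symmetric positive semidefinite, let α ≥ 0, and suppose (I − BA)^⊤ F (I − BA) ⪯ α²·F. For m ∈ ℕ let P_m = Σ_{i=0}^{m} (I − BA)^i B. Then I − P_m A = (I − BA)^{m+1}, and consequently (I − P_m A)^⊤ F (I − P_m A) ⪯ α^{2(m+1)}·F. -/

import Mathlib

open Matrix

noncomputable section

private lemma psd_smul {n : ℕ} {c : ℝ} (hc : 0 ≤ c) {M : Matrix (Fin n) (Fin n) ℝ}
    (h : M.PosSemidef) : (c • M).PosSemidef := by
  constructor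
  · unfold Matrix.IsHermitian at *
    rw [Matrix.conjTranspose_smul, h.1]
    simp
  · intro x
    have := mul_nonneg hc (h.2 x)
    simp only [Finsupp.sum, Finset.mul_sum] at this ⊢
    refine le_of_le_of_eq this ?_
    exact Finset.sum_congr rfl fun i _ => Finset.sum_congr rfl fun j _ => by
      simp only [Matrix.smul_apply, smul_eq_mul]; ring

private lemma psd_pow {n : ℕ} (M F : Matrix (Fin n) (Fin n) ℝ) (α : ℝ) (hα : 0 ≤ α)
    (h : (α ^ 2 • F - Mᵀ * F * M).PosSemidef) (k : ℕ) :
    (α ^ (2 * k) • F - (M ^ k)ᵀ * F * M ^ k).PosSemidef := by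
  induction k with
  | zero => simp [Matrix.PosSemidef.zero]
  | succ k ih =>
    have h1 : (α ^ 2 • (α ^ (2 * k) • F - (M ^ k)ᵀ * F * M ^ k)).PosSemidef :=
      psd_smul (sq_nonneg α) ih
    have h2 : ((M ^ k)ᵀ * (α ^ 2 • F - Mᵀ * F * M) * M ^ k).PosSemidef := by
      have := h.conjTranspose_mul_mul_same (M ^ k)
      simpa using this
    have key : α ^ (2 * (k + 1)) • F - (M ^ (k + 1))ᵀ * F * M ^ (k + 1) =
        α ^ 2 • (α ^ (2 * k) • F - (M ^ k)ᵀ * F * M ^ k) +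
          (M ^ k)ᵀ * (α ^ 2 • F - Mᵀ * F * M) * M ^ k := by
      have hp : M ^ (k + 1) = M * M ^ k := pow_succ' M k
      rw [hp]
      simp only [Matrix.transpose_mul, Matrix.mul_sub, Matrix.sub_mul, Matrix.mul_smul,
        Matrix.smul_mul, smul_sub, smul_smul, Matrix.mul_assoc]
      rw [mul_add, mul_one, pow_add, mul_comm (α ^ 2)]
      abel
    rw [key]
    exact h1.add h2

/-- (Preconditioned Richardson iteration.) If `F` is PSD and
`(I − BA)ᵀ F (I − BA) ⪯ α²·F`, then for `P_m = Σ_{i=0}^m (I − BA)^i B` we have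
`I − P_m A = (I − BA)^{m+1}` and `(I − P_m A)ᵀ F (I − P_m A) ⪯ α^{2(m+1)}·F`. -/
theorem richardson_iteration {n : ℕ} (A B F : Matrix (Fin n) (Fin n) ℝ)
    (hF : F.PosSemidef) (α : ℝ) (hα : 0 ≤ α)
    (h : (α ^ 2 • F - (1 - B * A)ᵀ * F * (1 - B * A)).PosSemidef) (m : ℕ) :
    (1 : Matrix (Fin n) (Fin n) ℝ) -
        (∑ i ∈ Finset.range (m + 1), (1 - B * A) ^ i * B) * A =
      (1 - B * A) ^ (m + 1) ∧
    (α ^ (2 * (m + 1)) • F -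
        ((1 : Matrix (Fin n) (Fin n) ℝ) -
            (∑ i ∈ Finset.range (m + 1), (1 - B * A) ^ i * B) * A)ᵀ * F *
          ((1 : Matrix (Fin n) (Fin n) ℝ) -
            (∑ i ∈ Finset.range (m + 1), (1 - B * A) ^ i * B) * A)).PosSemidef := by
  have hid : (1 : Matrix (Fin n) (Fin n) ℝ) -
      (∑ i ∈ Finset.range (m + 1), (1 - B * A) ^ i * B) * A = (1 - B * A) ^ (m + 1) := by
    have := geom_sum_mul (1 - B * A) (m + 1)
    have h2 : ((1 : Matrix (Fin n) (Fin n) ℝ) - B * A) - 1 = -(B * A) := by abel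
    rw [h2, mul_neg] at this
    have h3 : (∑ i ∈ Finset.range (m + 1), (1 - B * A) ^ i * B) * A =
        (∑ i ∈ Finset.range (m + 1), (1 - B * A) ^ i) * (B * A) := by
      rw [Finset.sum_mul, Finset.sum_mul]
      exact Finset.sum_congr rfl fun i _ => Matrix.mul_assoc _ _ _
    have h4 : (1 - B * A) ^ (m + 1) =
        -((∑ i ∈ Finset.range (m + 1), (1 - B * A) ^ i) * (B * A)) + 1 :=
      sub_eq_iff_eq_add.mp this.symm
    rw [h3, h4]
    abel
  refine ⟨hid, ?_⟩
  rw [hid]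
  exact psd_pow (1 - B * A) F α hα h (m + 1)

end
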